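/- For any n×n matrices A and B over the nonnegative reals (n ≥ 1), the following trace identity holds: Tr(A ⊕ B) = Tr(A) ⊕ max_{k=1,…,n−1} max_{m=1,…,n−k} max_{(i_1,…,i_k)} tr(A^{i_1} ⊗ B ⊗ A^{i_2} ⊗ B ⊗ ⋯ ⊗ A^{i_k} ⊗ B) ⊕ Tr(B), where the inner maximum is over all tuples of nonnegative integers (i_1, …, i_k) with i_1 + ⋯ + i_k = m. -/

import Mathlib

open scoped NNReal

/-- Square matrices over the max-times semifield of nonnegative reals. -/
abbrev TMat (n : ℕ) := Matrix (Fin n) (Fin n) ℝ≥0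

/-- Tropical (max-times) matrix product. -/
noncomputable def tmul {n : ℕ} (A B : TMat n) : TMat n :=
  fun i j => Finset.univ.sup fun k => A i k * B k j

/-- Tropical (max-times) matrix-vector product. -/
noncomputable def tmulVec {n : ℕ} (A : TMat n) (x : Fin n → ℝ≥0) : Fin n → ℝ≥0 :=
  fun i => Finset.univ.sup fun j => A i j * x j

/-- Tropical identity matrix. -/
noncomputable def tId (n : ℕ) : TMat n := fun i j => if i = j then 1 else 0

/-- Tropical matrix powers. -/
noncomputable def tpow {n : ℕ} (A : TMat n) : ℕ → TMat n
  | 0 => tId n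
  | k + 1 => tmul A (tpow A k)

/-- Tropical (entrywise max) matrix addition. -/
noncomputable def tadd {n : ℕ} (A B : TMat n) : TMat n := fun i j => A i j ⊔ B i j

/-- Entrywise scalar multiplication. -/
noncomputable def tsmul {n : ℕ} (a : ℝ≥0) (A : TMat n) : TMat n := fun i j => a * A i j

/-- Tropical trace: tr A = max_i a_{ii}. -/
noncomputable def ttr {n : ℕ} (A : TMat n) : ℝ≥0 := Finset.univ.sup fun i => A i i

/-- Tropical "determinant": Tr(A) = max_{k=1..n} tr(A^k). -/
noncomputable def tTr {n : ℕ} (A : TMat n) : ℝ≥0 :=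
  (Finset.Icc 1 n).sup fun k => ttr (tpow A k)

/-- Kleene star: entrywise max of A^0, ..., A^{n-1}. -/
noncomputable def tstar {n : ℕ} (A : TMat n) : TMat n :=
  fun i j => (Finset.range n).sup fun k => tpow A k i j

/-- Tropical product of a finite chain of matrices F 0 ⊗ F 1 ⊗ ⋯ ⊗ F (k-1). -/
noncomputable def tchain {n : ℕ} : (k : ℕ) → (Fin k → TMat n) → TMat n
  | 0, _ => tId n
  | k + 1, F => tmul (F 0) (tchain k fun t => F t.succ)

/-- Tuples of k nonnegative integers with sum m. -/
def tuples (k m : ℕ) : Finset (Fin k → Fin (m + 1)) :=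
  Finset.univ.filter fun f => (∑ t, (f t : ℕ)) = m

/-- Tuples of k integers from {0,1} with sum l. -/
def binTuples (k l : ℕ) : Finset (Fin k → Fin 2) :=
  Finset.univ.filter fun j => (∑ t, (j t : ℕ)) = l

/-- The objective f_M(x) = max_{i,j} m_{ij} x_j / x_i. -/
noncomputable def fobj {n : ℕ} (M : TMat n) (x : Fin n → ℝ≥0) : ℝ≥0 :=
  Finset.univ.sup fun p : Fin n × Fin n => M p.1 p.2 * x p.2 / x p.1

/-- Spectral radius: λ = max_{k=1..n} (tr(A^k))^{1/k}. -/
noncomputable def specRad {n : ℕ} (A : TMat n) : ℝ≥0 :=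
  (Finset.Icc 1 n).sup fun k => ttr (tpow A k) ^ ((1 : ℝ) / k)

/-- σ = max over k=1..n-1, m=1..n-k and tuples (i_1,…,i_k) with sum m of
    (tr(A^{i_1} C ⋯ A^{i_k} C))^{1/m}. -/
noncomputable def sigmaC {n : ℕ} (A C : TMat n) : ℝ≥0 :=
  (Finset.Icc 1 (n - 1)).sup fun k =>
    (Finset.Icc 1 (n - k)).sup fun m =>
      (tuples k m).sup fun f =>
        ttr (tchain k fun t => tmul (tpow A (f t : ℕ)) C) ^ ((1 : ℝ) / m)

/-- r_{k,l,m} = max over tuples (i_1,…,i_k) with sum m and (j_1,…,j_k) ∈ {0,1}^k with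
    sum l of tr(A^{i_1} B^{j_1} C^{1-j_1} ⋯ A^{i_k} B^{j_k} C^{1-j_k}). -/
noncomputable def rklm {n : ℕ} (A B C : TMat n) (k l m : ℕ) : ℝ≥0 :=
  (tuples k m).sup fun f =>
    (binTuples k l).sup fun j =>
      ttr (tchain k fun t =>
        tmul (tpow A (f t : ℕ)) (tmul (tpow B (j t : ℕ)) (tpow C (1 - (j t : ℕ)))))

/-- G(s) = max_{k,m,l} r_{k,l,m}^{1/l} s^{-m/l}. -/
noncomputable def Gfun {n : ℕ} (A B C : TMat n) (s : ℝ≥0) : ℝ≥0 :=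
  (Finset.Icc 1 (n - 1)).sup fun k =>
    (Finset.Icc 1 (n - k)).sup fun m =>
      (Finset.Icc 1 k).sup fun l =>
        rklm A B C k l m ^ ((1 : ℝ) / l) * s ^ (-(m : ℝ) / l)

/-- H(t) = max_{k,m,l} r_{k,l,m}^{1/m} t^{-l/m}. -/
noncomputable def Hfun {n : ℕ} (A B C : TMat n) (t : ℝ≥0) : ℝ≥0 :=
  (Finset.Icc 1 (n - 1)).sup fun k =>
    (Finset.Icc 1 (n - k)).sup fun m =>
      (Finset.Icc 1 k).sup fun l =>
        rklm A B C k l m ^ ((1 : ℝ) / m) * t ^ (-(l : ℝ) / m)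

/-- Unconstrained r_{k,m} = max over tuples (i_1,…,i_k) with sum m of
    tr(A^{i_1} B ⋯ A^{i_k} B). -/
noncomputable def rkm {n : ℕ} (A B : TMat n) (k m : ℕ) : ℝ≥0 :=
  (tuples k m).sup fun f => ttr (tchain k fun t => tmul (tpow A (f t : ℕ)) B)

/-- Unconstrained G(s) = max_{k,m} r_{k,m}^{1/k} s^{-m/k}. -/
noncomputable def Gfun0 {n : ℕ} (A B : TMat n) (s : ℝ≥0) : ℝ≥0 :=
  (Finset.Icc 1 (n - 1)).sup fun k =>
    (Finset.Icc 1 (n - k)).sup fun m =>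
      rkm A B k m ^ ((1 : ℝ) / k) * s ^ (-(m : ℝ) / k)

/-- Unconstrained H(t) = max_{k,m} r_{k,m}^{1/m} t^{-k/m}. -/
noncomputable def Hfun0 {n : ℕ} (A B : TMat n) (t : ℝ≥0) : ℝ≥0 :=
  (Finset.Icc 1 (n - 1)).sup fun k =>
    (Finset.Icc 1 (n - k)).sup fun m =>
      rkm A B k m ^ ((1 : ℝ) / m) * t ^ (-(k : ℝ) / m)

/-- Pareto-minimal points of a set V ⊆ ℝ≥0 × ℝ≥0. -/
def ParetoMin (V : Set (ℝ≥0 × ℝ≥0)) (p : ℝ≥0 × ℝ≥0) : Prop :=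
  p ∈ V ∧ ¬∃ q ∈ V, q.1 ≤ p.1 ∧ q.2 ≤ p.2 ∧ q ≠ p


section TraceAux

variable {n : ℕ}

lemma tsup_mul {ι : Type*} (s : Finset ι) (f : ι → ℝ≥0) (a : ℝ≥0) :
    s.sup f * a = s.sup fun i => f i * a := by
  rcases s.eq_empty_or_nonempty with h | h
  · simp [h]
  · refine le_antisymm ?_ (Finset.sup_le fun i hi => mul_le_mul_of_nonneg_right (Finset.le_sup hi) (zero_le (a := a)))
    obtain ⟨b, hb, hsup⟩ := Finset.exists_mem_eq_sup s h f
    rw [hsup]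
    exact Finset.le_sup (f := fun i => f i * a) hb

lemma tmul_sup {ι : Type*} (s : Finset ι) (f : ι → ℝ≥0) (a : ℝ≥0) :
    a * s.sup f = s.sup fun i => a * f i := by
  simpa [mul_comm] using tsup_mul s f a

lemma tmul_assoc (A B C : TMat n) : tmul (tmul A B) C = tmul A (tmul B C) := by
  funext i j
  show (Finset.univ.sup fun k => (Finset.univ.sup fun l => A i l * B l k) * C k j)
      = Finset.univ.sup fun l => A i l * (Finset.univ.sup fun k => B l k * C k j)
  calc (Finset.univ.sup fun k => (Finset.univ.sup fun l => A i l * B l k) * C k j)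
      = Finset.univ.sup fun k => Finset.univ.sup fun l => A i l * B l k * C k j := by
        simp only [tsup_mul]
    _ = Finset.univ.sup fun l => Finset.univ.sup fun k => A i l * (B l k * C k j) := by
        rw [Finset.sup_comm]; simp only [mul_assoc]
    _ = Finset.univ.sup fun l => A i l * (Finset.univ.sup fun k => B l k * C k j) := by
        simp only [tmul_sup]

lemma tmul_tId (A : TMat n) : tmul A (tId n) = A := by
  funext i j
  refine le_antisymm (Finset.sup_le fun k _ => ?_) ?_
  · by_cases h : k = j
    · subst h; simp [tId]
    · simp [tId, h]
  · have := Finset.le_sup (f := fun k => A i k * tId n k j) (Finset.mem_univ j)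
    simpa [tId, tmul] using this

lemma tId_tmul (A : TMat n) : tmul (tId n) A = A := by
  funext i j
  refine le_antisymm (Finset.sup_le fun k _ => ?_) ?_
  · by_cases h : i = k
    · subst h; simp [tId]
    · simp [tId, h]
  · have := Finset.le_sup (f := fun k => tId n i k * A k j) (Finset.mem_univ i)
    simpa [tId, tmul] using this

lemma tpow_add (A : TMat n) (a b : ℕ) :
    tpow A (a + b) = tmul (tpow A a) (tpow A b) := by
  induction a with
  | zero => simp [tpow, tId_tmul]
  | succ a ih =>
      have h : a + 1 + b = (a + b) + 1 := by omega
      rw [h]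
      show tmul A (tpow A (a + b)) = tmul (tmul A (tpow A a)) (tpow A b)
      rw [ih, tmul_assoc]

lemma ttr_comm (X Y : TMat n) : ttr (tmul X Y) = ttr (tmul Y X) := by
  have key : ∀ X Y : TMat n, ttr (tmul X Y) ≤ ttr (tmul Y X) := by
    intro X Y
    refine Finset.sup_le fun i _ => Finset.sup_le fun k _ => ?_
    calc X i k * Y k i = Y k i * X i k := mul_comm _ _
      _ ≤ tmul Y X k k := Finset.le_sup (f := fun l => Y k l * X l k) (Finset.mem_univ i)
      _ ≤ ttr (tmul Y X) := Finset.le_sup (f := fun l => tmul Y X l l) (Finset.mem_univ k)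
  exact le_antisymm (key X Y) (key Y X)

/-- Chain product of a list of matrices. -/
noncomputable def chainL {n : ℕ} : List (TMat n) → TMat n
  | [] => tId n
  | M :: L => tmul M (chainL L)

@[simp] lemma chainL_nil : chainL ([] : List (TMat n)) = tId n := rfl
@[simp] lemma chainL_cons (M : TMat n) (L : List (TMat n)) :
    chainL (M :: L) = tmul M (chainL L) := rfl

lemma chainL_append (L1 L2 : List (TMat n)) :
    chainL (L1 ++ L2) = tmul (chainL L1) (chainL L2) := by
  induction L1 with
  | nil => simp [tId_tmul]
  | cons M L1 ih => simp [ih, tmul_assoc]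

lemma tchain_eq_chainL (k : ℕ) (F : Fin k → TMat n) :
    tchain k F = chainL (List.ofFn F) := by
  induction k with
  | zero => rfl
  | succ k ih => rw [List.ofFn_succ]; show tmul (F 0) _ = _; rw [ih]; rfl

/-- Word matrix: product of letters, `true ↦ B`, `false ↦ A`. -/
noncomputable def wordMat (A B : TMat n) (L : List Bool) : TMat n :=
  chainL (L.map fun b => cond b B A)

@[simp] lemma wordMat_nil (A B : TMat n) : wordMat A B [] = tId n := rfl
@[simp] lemma wordMat_cons (A B : TMat n) (b : Bool) (L : List Bool) :
    wordMat A B (b :: L) = tmul (cond b B A) (wordMat A B L) := rfl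

lemma wordMat_append (A B : TMat n) (L1 L2 : List Bool) :
    wordMat A B (L1 ++ L2) = tmul (wordMat A B L1) (wordMat A B L2) := by
  simp [wordMat, chainL_append]

lemma exists_word (A B : TMat n) (K : ℕ) (i j : Fin n) :
    ∃ L : List Bool, L.length = K ∧ tpow (tadd A B) K i j ≤ wordMat A B L i j := by
  induction K generalizing i with
  | zero => exact ⟨[], rfl, le_of_eq rfl⟩
  | succ K ih =>
      have hne : (Finset.univ : Finset (Fin n)).Nonempty := ⟨i, Finset.mem_univ i⟩
      obtain ⟨k, -, hk⟩ := Finset.exists_mem_eq_sup Finset.univ hne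
        (fun k => tadd A B i k * tpow (tadd A B) K k j)
      obtain ⟨L, hL, hle⟩ := ih k
      have h1 : tpow (tadd A B) (K + 1) i j = tadd A B i k * tpow (tadd A B) K k j := hk
      rcases le_total (A i k) (B i k) with h | h
      · refine ⟨true :: L, by simp [hL], ?_⟩
        rw [h1]
        have h2 : tadd A B i k = B i k := sup_eq_right.mpr h
        calc tadd A B i k * tpow (tadd A B) K k j
            ≤ B i k * wordMat A B L k j := by rw [h2]; exact mul_le_mul_of_nonneg_left hle zero_le
          _ ≤ wordMat A B (true :: L) i j :=
              Finset.le_sup (f := fun l => B i l * wordMat A B L l j) (Finset.mem_univ k)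
      · refine ⟨false :: L, by simp [hL], ?_⟩
        rw [h1]
        have h2 : tadd A B i k = A i k := sup_eq_left.mpr h
        calc tadd A B i k * tpow (tadd A B) K k j
            ≤ A i k * wordMat A B L k j := by rw [h2]; exact mul_le_mul_of_nonneg_left hle zero_le
          _ ≤ wordMat A B (false :: L) i j :=
              Finset.le_sup (f := fun l => A i l * wordMat A B L l j) (Finset.mem_univ k)

lemma wordMat_all_false (A B : TMat n) (L : List Bool) (hL : ∀ b ∈ L, b = false) :
    wordMat A B L = tpow A L.length := by
  induction L with
  | nil => rfl
  | cons b L ih =>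
      have hb : b = false := hL b List.mem_cons_self
      subst hb
      rw [wordMat_cons, ih fun b hb => hL b (List.mem_cons_of_mem _ hb)]
      rfl

lemma wordMat_all_true (A B : TMat n) (L : List Bool) (hL : ∀ b ∈ L, b = true) :
    wordMat A B L = tpow B L.length := by
  induction L with
  | nil => rfl
  | cons b L ih =>
      have hb : b = true := hL b List.mem_cons_self
      subst hb
      rw [wordMat_cons, ih fun b hb => hL b (List.mem_cons_of_mem _ hb)]
      rfl

lemma count_true_add_false (L : List Bool) : L.count true + L.count false = L.length := by
  induction L with
  | nil => rfl
  | cons b L ih => cases b <;> simp [List.count_cons] <;> omega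

lemma parse_word (A B : TMat n) (M0 : List Bool) :
    ∃ g : List ℕ, g.length = M0.count true + 1 ∧ g.sum = M0.count false ∧
      wordMat A B (M0 ++ [true]) = chainL (g.map fun i => tmul (tpow A i) B) := by
  induction M0 with
  | nil =>
      refine ⟨[0], by simp, by simp, ?_⟩
      show chainL [B] = chainL [tmul (tId n) B]
      rw [tId_tmul]
  | cons b M0 ih =>
      obtain ⟨g, hlen, hsum, heq⟩ := ih
      cases b with
      | true =>
          refine ⟨0 :: g, by simp [hlen, List.count_cons], by simp [hsum, List.count_cons], ?_⟩
          have h0 : tmul (tpow A 0) B = B := tId_tmul B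
          show tmul B (wordMat A B (M0 ++ [true])) =
            tmul (tmul (tpow A 0) B) (chainL (g.map fun i => tmul (tpow A i) B))
          rw [heq, h0]
      | false =>
          match g, hlen with
          | i :: rest, hlen =>
            refine ⟨(i + 1) :: rest, by simpa [List.count_cons] using hlen,
              by simp [List.count_cons] at hsum ⊢; omega, ?_⟩
            show tmul A (wordMat A B (M0 ++ [true])) = _
            rw [heq]
            show tmul A (tmul (tmul (tpow A i) B) _) = tmul (tmul (tpow A (i + 1)) B) _
            rw [← tmul_assoc, ← tmul_assoc]
            rfl

lemma list_sum_fin (g : List ℕ) : (∑ t : Fin g.length, g.get t) = g.sum := by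
  rw [← List.sum_ofFn, List.ofFn_get]

lemma chainL_eq_tchain (A B : TMat n) (g : List ℕ) (f : Fin g.length → ℕ)
    (hf : ∀ t, f t = g.get t) :
    chainL (g.map fun i => tmul (tpow A i) B) = tchain g.length fun t => tmul (tpow A (f t)) B := by
  have h1 : g.map (fun i => tmul (tpow A i) B) =
      List.ofFn (fun t : Fin g.length => tmul (tpow A (f t)) B) := by
    conv_lhs => rw [← List.ofFn_get g]
    rw [List.map_ofFn]
    congr 1
    funext t
    simp [Function.comp, hf]
  rw [tchain_eq_chainL, h1]

-- monotonicity facts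
lemma tmul_mono {A A' B B' : TMat n} (hA : ∀ i j, A i j ≤ A' i j)
    (hB : ∀ i j, B i j ≤ B' i j) : ∀ i j, tmul A B i j ≤ tmul A' B' i j := by
  intro i j
  refine Finset.sup_le fun k _ => ?_
  exact le_trans (mul_le_mul' (hA i k) (hB k j))
    (Finset.le_sup (f := fun k => A' i k * B' k j) (Finset.mem_univ k))

lemma tpow_mono {A C : TMat n} (h : ∀ i j, A i j ≤ C i j) (K : ℕ) :
    ∀ i j, tpow A K i j ≤ tpow C K i j := by
  induction K with
  | zero => intro i j; exact le_refl _
  | succ K ih => exact tmul_mono h ih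

lemma ttr_mono {A C : TMat n} (h : ∀ i j, A i j ≤ C i j) : ttr A ≤ ttr C :=
  Finset.sup_le fun i _ => le_trans (h i i)
    (Finset.le_sup (f := fun i => C i i) (Finset.mem_univ i))

lemma chainL_le_pow (A B : TMat n) (g : List ℕ) :
    ∀ i j, chainL (g.map fun i => tmul (tpow A i) B) i j ≤
      tpow (tadd A B) (g.sum + g.length) i j := by
  induction g with
  | nil => intro i j; exact le_of_eq rfl
  | cons a g ih =>
      intro i j
      have h1 : ∀ i j, tmul (tpow A a) B i j ≤ tpow (tadd A B) (a + 1) i j := by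
        have hA : ∀ i j, A i j ≤ tadd A B i j := fun i j => le_sup_left
        have hB : ∀ i j, B i j ≤ tadd A B i j := fun i j => le_sup_right
        have h2 : ∀ i j, B i j ≤ tpow (tadd A B) 1 i j := by
          intro i j
          have : tpow (tadd A B) 1 = tadd A B := by
            show tmul (tadd A B) (tId n) = tadd A B
            exact tmul_tId _
          rw [this]; exact hB i j
        have := tmul_mono (tpow_mono hA a) h2
        intro i j
        refine le_trans (this i j) (le_of_eq ?_)
        rw [← tpow_add]
      have harith : (a :: g).sum + (a :: g).length = (a + 1) + (g.sum + g.length) := by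
        simp; omega
      rw [harith, tpow_add]
      exact tmul_mono h1 ih i j

lemma mem_trace_bound (A : TMat n) {K : ℕ} (h1 : 1 ≤ K) (h2 : K ≤ n) :
    ttr (tpow A K) ≤ tTr A :=
  Finset.le_sup (f := fun k => ttr (tpow A k)) (Finset.mem_Icc.mpr ⟨h1, h2⟩)

lemma mid_bound (A B : TMat n) {k m : ℕ} (hk : k ∈ Finset.Icc 1 (n - 1))
    (hm : m ∈ Finset.Icc 1 (n - k)) {f0 : Fin k → Fin (m + 1)} (hmem : f0 ∈ tuples k m) :
    ttr (tchain k fun tt => tmul (tpow A (f0 tt : ℕ)) B) ≤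
      (Finset.Icc 1 (n - 1)).sup fun k =>
        (Finset.Icc 1 (n - k)).sup fun m =>
          (tuples k m).sup fun f =>
            ttr (tchain k fun tt => tmul (tpow A (f tt : ℕ)) B) := by
  calc ttr (tchain k fun tt => tmul (tpow A (f0 tt : ℕ)) B)
      ≤ (tuples k m).sup fun f =>
          ttr (tchain k fun tt => tmul (tpow A (f tt : ℕ)) B) := by
        apply Finset.le_sup hmem
    _ ≤ (Finset.Icc 1 (n - k)).sup fun m => (tuples k m).sup fun f =>
          ttr (tchain k fun tt => tmul (tpow A (f tt : ℕ)) B) := by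
        apply Finset.le_sup hm
    _ ≤ _ := by apply Finset.le_sup hk

end TraceAux

set_option maxHeartbeats 1000000 in
/-- Trace identity: Tr(A ⊕ B) = Tr(A) ⊕ max_{k=1..n-1} max_{m=1..n-k} max over tuples
(i_1,…,i_k) with i_1+⋯+i_k = m of tr(A^{i_1} B ⋯ A^{i_k} B) ⊕ Tr(B). -/
theorem stmt4 {n : ℕ} (hn : 1 ≤ n) (A B : TMat n) :
    tTr (tadd A B) =
      tTr A ⊔
        ((Finset.Icc 1 (n - 1)).sup fun k =>
          (Finset.Icc 1 (n - k)).sup fun m =>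
            (tuples k m).sup fun f =>
              ttr (tchain k fun t => tmul (tpow A (f t : ℕ)) B)) ⊔
        tTr B := by
  refine le_antisymm ?_ ?_
  · refine Finset.sup_le fun K hK => ?_
    obtain ⟨hK1, hKn⟩ := Finset.mem_Icc.mp hK
    obtain ⟨i, -, hi⟩ := Finset.exists_mem_eq_sup (Finset.univ : Finset (Fin n))
      ⟨⟨0, hn⟩, Finset.mem_univ _⟩ (fun i => tpow (tadd A B) K i i)
    obtain ⟨L, hLlen, hLle⟩ := exists_word A B K i i
    have h1 : ttr (tpow (tadd A B) K) ≤ ttr (wordMat A B L) := by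
      rw [ttr, hi]
      exact le_trans hLle
        (Finset.le_sup (f := fun i => wordMat A B L i i) (Finset.mem_univ i))
    refine le_trans h1 ?_
    by_cases h0 : L.count true = 0
    · have hall : ∀ b ∈ L, b = false := by
        intro b hb
        cases b
        · rfl
        · exact absurd hb (List.count_eq_zero.mp h0)
      rw [wordMat_all_false A B L hall, hLlen]
      exact le_trans (mem_trace_bound A hK1 hKn) (le_trans le_sup_left le_sup_left)
    by_cases h2 : L.count true = L.length
    · have hall : ∀ b ∈ L, b = true := fun b hb => (List.count_eq_length.mp h2 b hb).symm
      rw [wordMat_all_true A B L hall, hLlen]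
      exact le_trans (mem_trace_bound B hK1 hKn) le_sup_right
    · have hcount : L.count true + L.count false = L.length := count_true_add_false L
      have hclen : L.count true ≤ L.length := List.count_le_length
      have htr : (true : Bool) ∈ L := by
        rcases List.count_pos_iff.mp (by omega : 0 < L.count true) with h
        exact h
      obtain ⟨s, t, hst⟩ := List.append_of_mem htr
      have hrot : ttr (wordMat A B L) = ttr (wordMat A B ((t ++ s) ++ [true])) := by
        have h3 : L = (s ++ [true]) ++ t := by
          rw [hst, List.append_assoc]
          rfl
        rw [h3, wordMat_append, ttr_comm, ← wordMat_append, ← List.append_assoc]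
      rw [hrot]
      obtain ⟨g, hglen, hgsum, hgeq⟩ := parse_word A B (t ++ s)
      rw [hgeq]
      have hc1 : L.count true = (t ++ s).count true + 1 := by
        rw [hst]; simp [List.count_append, List.count_cons]; omega
      have hc2 : L.count false = (t ++ s).count false := by
        rw [hst]; simp [List.count_append, List.count_cons]; omega
      have hk1 : 1 ≤ g.length := by omega
      have hk2 : g.length ≤ n - 1 := by omega
      have hm1 : 1 ≤ g.sum := by omega
      have hm2 : g.sum ≤ n - g.length := by omega
      have hbound : ∀ tt : Fin g.length, g.get tt < g.sum + 1 := by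
        intro tt
        exact Nat.lt_succ_of_le
          (List.single_le_sum (fun x _ => Nat.zero_le x) _ (List.get_mem g tt))
      obtain ⟨f0, hf0⟩ : ∃ f0 : Fin g.length → Fin (g.sum + 1),
          ∀ tt, (f0 tt : ℕ) = g.get tt :=
        ⟨fun tt => ⟨g.get tt, hbound tt⟩, fun tt => rfl⟩
      have hchain : chainL (g.map fun i => tmul (tpow A i) B) =
          tchain g.length fun tt => tmul (tpow A (f0 tt : ℕ)) B :=
        chainL_eq_tchain A B g _ hf0
      rw [hchain]
      have hmem : f0 ∈ tuples g.length g.sum := by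
        refine Finset.mem_filter.mpr ⟨Finset.mem_univ _, ?_⟩
        simp only [hf0]
        exact list_sum_fin g
      refine le_trans (mid_bound A B (Finset.mem_Icc.mpr ⟨hk1, hk2⟩)
        (Finset.mem_Icc.mpr ⟨hm1, hm2⟩) hmem) ?_
      exact le_trans le_sup_right le_sup_left
  · refine sup_le (sup_le ?_ ?_) ?_
    · refine Finset.sup_le fun K hK => ?_
      obtain ⟨hKa, hKb⟩ := Finset.mem_Icc.mp hK
      exact le_trans (ttr_mono (tpow_mono (fun i j => le_sup_left) K))
        (mem_trace_bound _ hKa hKb)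
    · refine Finset.sup_le fun k hk => Finset.sup_le fun m hm => Finset.sup_le fun f hf => ?_
      obtain ⟨hk1, hk2⟩ := Finset.mem_Icc.mp hk
      obtain ⟨hm1, hm2⟩ := Finset.mem_Icc.mp hm
      have hfs : (∑ tt, (f tt : ℕ)) = m := (Finset.mem_filter.mp hf).2
      have hglen : (List.ofFn fun tt => (f tt : ℕ)).length = k := List.length_ofFn
      have hgsum : (List.ofFn fun tt => (f tt : ℕ)).sum = m := by
        rw [List.sum_ofFn]; exact hfs
      have heq : tchain k (fun tt => tmul (tpow A (f tt : ℕ)) B) =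
          chainL ((List.ofFn fun tt => (f tt : ℕ)).map fun i => tmul (tpow A i) B) := by
        rw [tchain_eq_chainL, List.map_ofFn]
        rfl
      rw [heq]
      refine le_trans (ttr_mono (chainL_le_pow A B _)) ?_
      rw [hglen, hgsum]
      exact mem_trace_bound (tadd A B) (by omega) (by omega)
    · refine Finset.sup_le fun K hK => ?_
      obtain ⟨hKa, hKb⟩ := Finset.mem_Icc.mp hK
      exact le_trans (ttr_mono (tpow_mono (fun i j => le_sup_right) K))
        (mem_trace_bound _ hKa hKb)
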